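/- Let (q,n) be a Dickson pair. If 1 ≤ k < l ≤ n, then (q^k - 1)/(q - 1) and (q^l - 1)/(q - 1) are incongruent modulo n; that is, ∑_{i=0}^{k-1} q^i ≢ ∑_{i=0}^{l-1} q^i (mod n). -/

import Mathlib

/-- A pair `(q, n)` of natural numbers is a Dickson pair if `q = p^l` for some prime `p`
and integer `l ≥ 1`, every prime divisor of `n` divides `q - 1`, and if `q ≡ 3 (mod 4)`
then `4` does not divide `n`. -/
def DicksonPair (q n : ℕ) : Prop :=
  (∃ p l : ℕ, p.Prime ∧ 1 ≤ l ∧ q = p ^ l) ∧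
  (∀ r : ℕ, r.Prime → r ∣ n → r ∣ q - 1) ∧
  (q % 4 = 3 → ¬ (4 ∣ n))

lemma aux_sub_one_mul_geom (q m : ℕ) (hq : 1 ≤ q) :
    (q - 1) * ∑ i ∈ Finset.range m, q ^ i = q ^ m - 1 := by
  induction m with
  | zero => simp
  | succ m ih =>
    rw [Finset.sum_range_succ, Nat.mul_add, ih, Nat.sub_one_mul, pow_succ]
    have h1 : 1 ≤ q ^ m := Nat.one_le_pow _ _ (by omega)
    have h2 : q ^ m ≤ q ^ m * q := Nat.le_mul_of_pos_right _ (by omega)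
    have h3 : q * q ^ m = q ^ m * q := mul_comm _ _
    omega

lemma aux_geom_mod_two (q m : ℕ) (hq : q % 2 = 1) :
    (∑ i ∈ Finset.range m, q ^ i) % 2 = m % 2 := by
  induction m with
  | zero => simp
  | succ m ih =>
    rw [Finset.sum_range_succ]
    have : q ^ m % 2 = 1 := by
      simp [Nat.pow_mod, hq]
    omega

lemma aux_key {q n : ℕ} (h : DicksonPair q n) {m : ℕ} (hm : m ≠ 0) (hn : n ≠ 0)
    (hS : n ∣ ∑ i ∈ Finset.range m, q ^ i) : n ∣ m := by
  obtain ⟨⟨p, lp, hp, hlp, hq⟩, hdiv, h4⟩ := h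
  have hq2 : 2 ≤ q := by
    subst hq
    calc 2 ≤ p := hp.two_le
    _ = p ^ 1 := (pow_one p).symm
    _ ≤ p ^ lp := Nat.pow_le_pow_right hp.pos hlp
  set S := ∑ i ∈ Finset.range m, q ^ i with hSdef
  have hS0 : S ≠ 0 := by
    have : 0 < S := Finset.sum_pos (fun i _ => pow_pos (by omega) i)
      (Finset.nonempty_range_iff.mpr hm)
    omega
  rw [← Nat.factorization_le_iff_dvd hn hm, Finsupp.le_def]
  intro r
  by_cases hr : r.Prime
  swap
  · simp [Nat.factorization_eq_zero_of_not_prime _ hr]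
  haveI : Fact r.Prime := ⟨hr⟩
  set e := n.factorization r with hedef
  rcases Nat.eq_zero_or_pos e with he | he
  · simp [← hedef, he]
  have hrn : r ∣ n := Nat.dvd_of_factorization_pos (by omega)
  have hrq1 : r ∣ q - 1 := hdiv r hr hrn
  have hxq : ¬ r ∣ q := by
    intro hd
    have h1 : r ∣ q - (q - 1) := Nat.dvd_sub hd hrq1
    have : q - (q - 1) = 1 := by omega
    rw [this] at h1
    exact hr.one_lt.ne' (Nat.dvd_one.mp h1)
  have hreS : r ^ e ∣ S := dvd_trans (dvd_trans (Nat.ordProj_dvd n r) hS) dvd_rfl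
  have hvS : e ≤ padicValNat r S := (padicValNat_dvd_iff_le hS0).mp hreS
  have hq10 : q - 1 ≠ 0 := by omega
  have hmul : padicValNat r (q ^ m - 1) = padicValNat r (q - 1) + padicValNat r S := by
    rw [← aux_sub_one_mul_geom q m (by omega), padicValNat.mul hq10 hS0]
  rw [Nat.factorization_def m hr]
  -- suffices to show e ≤ padicValNat r m
  rcases eq_or_ne r 2 with rfl | hr2
  · -- r = 2
    have hqodd : q % 2 = 1 := by
      rcases Nat.even_or_odd q with he' | ho
      · exact absurd (even_iff_two_dvd.mp he') hxq
      · omega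
    have hparity : S % 2 = m % 2 := aux_geom_mod_two q m hqodd
    have h2S : 2 ∣ S := dvd_trans (dvd_pow_self 2 (by omega : e ≠ 0)) hreS
    rcases (by omega : q % 4 = 1 ∨ q % 4 = 3) with hq4 | hq4
    · -- q ≡ 1 mod 4 : m must be even, use LTE for 2
      have hmeven : Even m := by
        rw [Nat.even_iff]
        omega
      have hlte := padicValNat.pow_two_sub_pow (x := q) (y := 1) (by omega)
        (by omega : 2 ∣ q - 1) (by omega : ¬ 2 ∣ q) hm hmeven
      rw [one_pow] at hlte
      have hv1 : padicValNat 2 (q + 1) = 1 := by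
        have hd : 2 ^ 1 ∣ q + 1 := by omega
        have hnd : ¬ 2 ^ 2 ∣ q + 1 := by omega
        have hle : 1 ≤ padicValNat 2 (q + 1) := (padicValNat_dvd_iff_le (by omega)).mp hd
        have hge : ¬ 2 ≤ padicValNat 2 (q + 1) := fun hc =>
          hnd ((padicValNat_dvd_iff_le (by omega)).mpr hc)
        omega
      omega
    · -- q ≡ 3 mod 4 : e = 1
      have hnot4 : ¬ 4 ∣ n := h4 hq4
      have he1 : e ≤ 1 := by
        by_contra hc
        exact hnot4 (dvd_trans (by
          have : (4 : ℕ) = 2 ^ 2 := by norm_num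
          rw [this]
          exact pow_dvd_pow 2 (by omega)) (Nat.ordProj_dvd n 2))
      have h2m : (2 : ℕ) ^ 1 ∣ m := by omega
      have := (padicValNat_dvd_iff_le hm).mp h2m
      omega
  · -- r odd
    have hodd : Odd r := hr.odd_of_ne_two hr2
    have hlte := padicValNat.pow_sub_pow (p := r) (x := q) (y := 1) hodd (by omega)
      hrq1 hxq hm
    rw [one_pow] at hlte
    have : e ≤ padicValNat r m := by omega
    exact this

/-- For a Dickson pair `(q, n)` and `1 ≤ k < l ≤ n`, the geometric sums
`∑_{i=0}^{k-1} q^i` and `∑_{i=0}^{l-1} q^i` are incongruent modulo `n`. -/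
theorem dickson_pair_geom_sum_not_modEq (q n k l : ℕ) (h : DicksonPair q n)
    (hk : 1 ≤ k) (hkl : k < l) (hl : l ≤ n) :
    ¬ (∑ i ∈ Finset.range k, q ^ i) ≡ (∑ i ∈ Finset.range l, q ^ i) [MOD n] := by
  intro hMod
  have hn : n ≠ 0 := by omega
  set m := l - k with hmdef
  have hm : m ≠ 0 := by omega
  -- split the sum
  have hsplit : ∑ i ∈ Finset.range l, q ^ i
      = (∑ i ∈ Finset.range k, q ^ i) + q ^ k * ∑ i ∈ Finset.range m, q ^ i := by
    rw [← Finset.sum_range_add_sum_Ico _ (le_of_lt hkl), Finset.sum_Ico_eq_sum_range,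
      Finset.mul_sum]
    congr 1
    refine Finset.sum_congr rfl fun i _ => ?_
    rw [← pow_add]
  have hle : (∑ i ∈ Finset.range k, q ^ i) ≤ ∑ i ∈ Finset.range l, q ^ i := by
    rw [hsplit]; omega
  have hdvd : n ∣ (∑ i ∈ Finset.range l, q ^ i) - (∑ i ∈ Finset.range k, q ^ i) :=
    (Nat.modEq_iff_dvd' hle).mp hMod
  have hdvd2 : n ∣ q ^ k * ∑ i ∈ Finset.range m, q ^ i := by
    have : (∑ i ∈ Finset.range l, q ^ i) - (∑ i ∈ Finset.range k, q ^ i)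
        = q ^ k * ∑ i ∈ Finset.range m, q ^ i := by rw [hsplit]; omega
    rwa [this] at hdvd
  -- n is coprime to q
  have hcop : Nat.Coprime n q := by
    by_contra hc
    obtain ⟨r, hr, hrn, hrq⟩ := Nat.Prime.not_coprime_iff_dvd.mp hc
    have hq2 : 2 ≤ q := by
      obtain ⟨⟨p, lp, hp, hlp, hq⟩, _, _⟩ := h
      subst hq
      calc 2 ≤ p := hp.two_le
      _ = p ^ 1 := (pow_one p).symm
      _ ≤ p ^ lp := Nat.pow_le_pow_right hp.pos hlp
    have hrq1 : r ∣ q - 1 := h.2.1 r hr hrn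
    have h1 : r ∣ q - (q - 1) := Nat.dvd_sub hrq hrq1
    have : q - (q - 1) = 1 := by omega
    rw [this] at h1
    exact hr.one_lt.ne' (Nat.dvd_one.mp h1)
  have hdvdS : n ∣ ∑ i ∈ Finset.range m, q ^ i :=
    (Nat.Coprime.dvd_of_dvd_mul_left (hcop.pow_right k) hdvd2)
  have := aux_key h hm hn hdvdS
  have : n ≤ m := Nat.le_of_dvd (by omega) this
  omega
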